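/- Let X = ∑ᵢ₌₁ⁿ Xᵢ and Y = ∑ᵢ₌₁ⁿ Yᵢ be sums of independent {0,1}-valued random variables (X and Y independent of each other), and fix ε₁, ε₀, δ₀ ∈ (0,1). Let C = 2(e^{ε₀+ε₁} + 1 + e^{ε₀/2}). If E[X] ≤ e^{ε₁}·E[Y], then Pr[X ≥ e^{ε₁+ε₀}·Y + (C/ε₀)·ln(2/δ₀)] ≤ δ₀. -/

import Mathlib

open MeasureTheory ProbabilityTheory Real

section aux
variable {Ω : Type*} [MeasurableSpace Ω]

lemma bern_integrable (μ : Measure Ω) [IsProbabilityMeasure μ] (W : Ω → ℝ)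
    (hm : Measurable W) (hv : ∀ ω, W ω = 0 ∨ W ω = 1) : Integrable W μ := by
  refine Integrable.mono' (integrable_const 1) hm.aestronglyMeasurable (ae_of_all _ fun ω => ?_)
  rcases hv ω with h | h <;> simp [h]

lemma bern_int_mem (μ : Measure Ω) [IsProbabilityMeasure μ] (W : Ω → ℝ)
    (hm : Measurable W) (hv : ∀ ω, W ω = 0 ∨ W ω = 1) :
    0 ≤ ∫ ω, W ω ∂μ ∧ (∫ ω, W ω ∂μ) ≤ 1 := by
  constructor
  · apply integral_nonneg; intro ω; rcases hv ω with h | h <;> simp [h]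
  · calc (∫ ω, W ω ∂μ) ≤ ∫ _ω, (1:ℝ) ∂μ := by
          apply integral_mono (bern_integrable μ W hm hv) (integrable_const 1)
          intro ω; rcases hv ω with h | h <;> simp [h]
    _ = 1 := by simp

lemma mgf_bern_sum_le {ι : Type*} (μ : Measure Ω) [IsProbabilityMeasure μ]
    (Z : ι → Ω → ℝ) (hmeas : ∀ i, Measurable (Z i)) (hval : ∀ i ω, Z i ω = 0 ∨ Z i ω = 1)
    (hindep : iIndepFun Z μ) (s : Finset ι) (t : ℝ) :
    mgf (∑ i ∈ s, Z i) μ t ≤ Real.exp ((Real.exp t - 1) * ∑ i ∈ s, ∫ ω, Z i ω ∂μ) := by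
  rw [hindep.mgf_sum hmeas]
  calc ∏ i ∈ s, mgf (Z i) μ t
      ≤ ∏ i ∈ s, Real.exp ((Real.exp t - 1) * ∫ ω, Z i ω ∂μ) := by
        apply Finset.prod_le_prod (fun i _ => mgf_nonneg)
        intro i _
        have hZint : Integrable (Z i) μ := bern_integrable μ (Z i) (hmeas i) (hval i)
        have key : ∀ ω, Real.exp (t * Z i ω) = 1 + (Real.exp t - 1) * Z i ω := by
          intro ω; rcases hval i ω with h | h <;> rw [h] <;> simp
        have hmgf : mgf (Z i) μ t = 1 + (Real.exp t - 1) * ∫ ω, Z i ω ∂μ := by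
          rw [mgf]
          simp_rw [key]
          rw [integral_add (integrable_const 1) (hZint.const_mul _), integral_const,
            MeasureTheory.integral_const_mul]
          simp
        rw [hmgf, add_comm]
        exact Real.add_one_le_exp _
    _ = Real.exp ((Real.exp t - 1) * ∑ i ∈ s, ∫ ω, Z i ω ∂μ) := by
        rw [← Real.exp_sum, Finset.mul_sum]

lemma exp_sum_integrable {ι : Type*} (μ : Measure Ω) [IsProbabilityMeasure μ]
    (Z : ι → Ω → ℝ) (hmeas : ∀ i, Measurable (Z i)) (hval : ∀ i ω, Z i ω = 0 ∨ Z i ω = 1)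
    (s : Finset ι) (t : ℝ) :
    Integrable (fun ω => Real.exp (t * (∑ i ∈ s, Z i) ω)) μ := by
  refine Integrable.mono' (integrable_const (Real.exp (|t| * s.card)))
    ?_ (ae_of_all _ fun ω => ?_)
  · have hWm : Measurable (∑ i ∈ s, Z i) := by
      have he : (∑ i ∈ s, Z i) = fun a => ∑ i ∈ s, Z i a := by funext a; simp
      rw [he]; exact Finset.measurable_sum s (fun i _ => hmeas i)
    exact (hWm.const_mul t).exp.aestronglyMeasurable
  · rw [Real.norm_eq_abs, abs_of_pos (Real.exp_pos _), Real.exp_le_exp]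
    have h0 : 0 ≤ (∑ i ∈ s, Z i) ω := by
      rw [Finset.sum_apply]
      apply Finset.sum_nonneg; intro i _; rcases hval i ω with h | h <;> simp [h]
    have h1 : (∑ i ∈ s, Z i) ω ≤ s.card := by
      rw [Finset.sum_apply]
      calc (∑ i ∈ s, Z i ω) ≤ ∑ _i ∈ s, (1:ℝ) := by
            apply Finset.sum_le_sum; intro i _; rcases hval i ω with h | h <;> simp [h]
        _ = s.card := by simp
    calc t * (∑ i ∈ s, Z i) ω ≤ |t| * (∑ i ∈ s, Z i) ω := by
          apply mul_le_mul_of_nonneg_right (le_abs_self t) h0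
      _ ≤ |t| * s.card := by apply mul_le_mul_of_nonneg_left h1 (abs_nonneg t)

/-- Chernoff upper/lower tail for Bernoulli sums, generic form. -/
lemma bern_tail_upper {ι : Type*} (μ : Measure Ω) [IsProbabilityMeasure μ]
    (Z : ι → Ω → ℝ) (hmeas : ∀ i, Measurable (Z i)) (hval : ∀ i ω, Z i ω = 0 ∨ Z i ω = 1)
    (hindep : iIndepFun Z μ) (s : Finset ι) (t a : ℝ) (ht : 0 ≤ t) :
    (μ {ω | a ≤ (∑ i ∈ s, Z i) ω}).toReal ≤
      Real.exp (-t * a + (Real.exp t - 1) * ∑ i ∈ s, ∫ ω, Z i ω ∂μ) := by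
  calc (μ {ω | a ≤ (∑ i ∈ s, Z i) ω}).toReal
      ≤ Real.exp (-t * a) * mgf (∑ i ∈ s, Z i) μ t :=
        measure_ge_le_exp_mul_mgf a ht (exp_sum_integrable μ Z hmeas hval s t)
    _ ≤ Real.exp (-t * a) * Real.exp ((Real.exp t - 1) * ∑ i ∈ s, ∫ ω, Z i ω ∂μ) := by
        apply mul_le_mul_of_nonneg_left (mgf_bern_sum_le μ Z hmeas hval hindep s t)
          (Real.exp_pos _).le
    _ = _ := by rw [← Real.exp_add]

lemma bern_tail_lower {ι : Type*} (μ : Measure Ω) [IsProbabilityMeasure μ]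
    (Z : ι → Ω → ℝ) (hmeas : ∀ i, Measurable (Z i)) (hval : ∀ i ω, Z i ω = 0 ∨ Z i ω = 1)
    (hindep : iIndepFun Z μ) (s : Finset ι) (t a : ℝ) (ht : t ≤ 0) :
    (μ {ω | (∑ i ∈ s, Z i) ω ≤ a}).toReal ≤
      Real.exp (-t * a + (Real.exp t - 1) * ∑ i ∈ s, ∫ ω, Z i ω ∂μ) := by
  calc (μ {ω | (∑ i ∈ s, Z i) ω ≤ a}).toReal
      ≤ Real.exp (-t * a) * mgf (∑ i ∈ s, Z i) μ t :=
        measure_le_le_exp_mul_mgf a ht (exp_sum_integrable μ Z hmeas hval s t)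
    _ ≤ Real.exp (-t * a) * Real.exp ((Real.exp t - 1) * ∑ i ∈ s, ∫ ω, Z i ω ∂μ) := by
        apply mul_le_mul_of_nonneg_left (mgf_bern_sum_le μ Z hmeas hval hindep s t)
          (Real.exp_pos _).le
    _ = _ := by rw [← Real.exp_add]

end aux

set_option maxHeartbeats 1000000 in
/-- Let `X = ∑ᵢ Xᵢ` and `Y = ∑ᵢ Yᵢ` be sums of `{0,1}`-valued random variables,
where the whole family `X₁,…,Xₙ,Y₁,…,Yₙ` is independent (in particular `X` and `Y`
are independently coupled).  Fix `ε₁, ε₀, δ₀ ∈ (0,1)` and let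
`C = 2(e^{ε₀+ε₁} + 1 + e^{ε₀/2})`.  If `E[X] ≤ e^{ε₁}·E[Y]`, then
`Pr[X ≥ e^{ε₁+ε₀}·Y + (C/ε₀)·ln(2/δ₀)] ≤ δ₀`. -/
theorem stmt8 {Ω : Type*} [MeasurableSpace Ω] (μ : Measure Ω) [IsProbabilityMeasure μ]
    (n : ℕ) (Z : (Fin n ⊕ Fin n) → Ω → ℝ)
    (hmeas : ∀ i, Measurable (Z i))
    (hval : ∀ i ω, Z i ω = 0 ∨ Z i ω = 1)
    (hindep : iIndepFun Z μ)
    (X Y : Ω → ℝ)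
    (hX : ∀ ω, X ω = ∑ i, Z (Sum.inl i) ω)
    (hY : ∀ ω, Y ω = ∑ i, Z (Sum.inr i) ω)
    (ε₁ ε₀ δ₀ : ℝ) (hε₁ : ε₁ ∈ Set.Ioo (0 : ℝ) 1) (hε₀ : ε₀ ∈ Set.Ioo (0 : ℝ) 1)
    (hδ₀ : δ₀ ∈ Set.Ioo (0 : ℝ) 1)
    (C : ℝ) (hC : C = 2 * (Real.exp (ε₀ + ε₁) + 1 + Real.exp (ε₀ / 2)))
    (hEXY : (∫ ω, X ω ∂μ) ≤ Real.exp ε₁ * ∫ ω, Y ω ∂μ) :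
    (μ {ω | Real.exp (ε₁ + ε₀) * Y ω + (C / ε₀) * Real.log (2 / δ₀) ≤ X ω}).toReal ≤
      δ₀ := by
  obtain ⟨hε₀0, hε₀1⟩ := hε₀
  obtain ⟨hε₁0, hε₁1⟩ := hε₁
  obtain ⟨hδ₀0, hδ₀1⟩ := hδ₀
  set ε : ℝ := ε₀ / 2 with hεdef
  have hε0 : 0 < ε := by positivity
  set L : ℝ := Real.log (2 / δ₀) with hLdef
  have hL0 : 0 < L := Real.log_pos (by rw [lt_div_iff₀ hδ₀0]; linarith)
  have hexpL : Real.exp (-L) = δ₀ / 2 := by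
    rw [Real.exp_neg, hLdef, Real.exp_log (by positivity)]
    field_simp
  set M : ℝ := L / ε with hMdef
  have hM0 : 0 < M := by positivity
  have hεM : ε * M = L := by rw [hMdef]; field_simp
  set eε : ℝ := Real.exp ε with heεdef
  have heε0 : 0 < eε := Real.exp_pos _
  have heε1 : 1 ≤ eε := Real.one_le_exp hε0.le
  set e1 : ℝ := Real.exp ε₁ with he1def
  have he10 : 0 < e1 := Real.exp_pos _
  set s₁ : Finset (Fin n ⊕ Fin n) := Finset.univ.map ⟨Sum.inl, Sum.inl_injective⟩ with hs₁
  set s₂ : Finset (Fin n ⊕ Fin n) := Finset.univ.map ⟨Sum.inr, Sum.inr_injective⟩ with hs₂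
  have hX' : ∀ ω, (∑ i ∈ s₁, Z i) ω = X ω := by
    intro ω; rw [hX ω, Finset.sum_apply, hs₁, Finset.sum_map]; rfl
  have hY' : ∀ ω, (∑ i ∈ s₂, Z i) ω = Y ω := by
    intro ω; rw [hY ω, Finset.sum_apply, hs₂, Finset.sum_map]; rfl
  set pX : ℝ := ∑ i ∈ s₁, ∫ ω, Z i ω ∂μ with hpXdef
  set pY : ℝ := ∑ i ∈ s₂, ∫ ω, Z i ω ∂μ with hpYdef
  have hpX : pX = ∫ ω, X ω ∂μ := by
    rw [hpXdef, ← integral_finset_sum s₁ (fun i _ => bern_integrable μ (Z i) (hmeas i) (hval i))]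
    exact integral_congr_ae (ae_of_all _ fun ω => by rw [← hX' ω, Finset.sum_apply])
  have hpY : pY = ∫ ω, Y ω ∂μ := by
    rw [hpYdef, ← integral_finset_sum s₂ (fun i _ => bern_integrable μ (Z i) (hmeas i) (hval i))]
    exact integral_congr_ae (ae_of_all _ fun ω => by rw [← hY' ω, Finset.sum_apply])
  have hpX0 : 0 ≤ pX :=
    Finset.sum_nonneg fun i _ => (bern_int_mem μ (Z i) (hmeas i) (hval i)).1
  have hpY0 : 0 ≤ pY :=
    Finset.sum_nonneg fun i _ => (bern_int_mem μ (Z i) (hmeas i) (hval i)).1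
  have hEXY' : pX ≤ e1 * pY := by rw [hpX, hpY]; exact hEXY
  -- thresholds
  set aX : ℝ := eε * pX + (eε + 1) * M with haXdef
  set aY : ℝ := Real.exp (-ε) * pY - M with haYdef
  -- upper tail bound
  have hA : (μ {ω | aX ≤ (∑ i ∈ s₁, Z i) ω}).toReal ≤ δ₀ / 2 := by
    refine (bern_tail_upper μ Z hmeas hval hindep s₁ ε aX hε0.le).trans ?_
    rw [← hexpL, Real.exp_le_exp]
    have hfactA : (1 - ε) * eε ≤ 1 := by
      have h := Real.add_one_le_exp (-ε)
      rw [Real.exp_neg, ← heεdef] at h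
      nlinarith [mul_le_mul_of_nonneg_right h heε0.le, inv_mul_cancel₀ heε0.ne']
    have hkey : -ε * aX + (eε - 1) * pX = pX * (eε - 1 - ε * eε) - (eε + 1) * L := by
      rw [haXdef, ← hεM]; ring
    rw [← hpXdef, hkey]
    have hh1 : pX * (eε - 1 - ε * eε) ≤ 0 :=
      mul_nonpos_of_nonneg_of_nonpos hpX0 (by nlinarith)
    have hh2 : 1 * L ≤ (eε + 1) * L :=
      mul_le_mul_of_nonneg_right (by linarith) hL0.le
    linarith
  -- lower tail bound
  have hB : (μ {ω | (∑ i ∈ s₂, Z i) ω ≤ aY}).toReal ≤ δ₀ / 2 := by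
    refine (bern_tail_lower μ Z hmeas hval hindep s₂ (-ε) aY (by linarith)).trans ?_
    rw [← hexpL, Real.exp_le_exp]
    have hfactB : (ε + 1) * Real.exp (-ε) ≤ 1 := by
      have h := Real.add_one_le_exp ε
      rw [← heεdef] at h
      rw [Real.exp_neg, ← heεdef]
      nlinarith [mul_le_mul_of_nonneg_right h (inv_nonneg.mpr heε0.le),
        mul_inv_cancel₀ heε0.ne']
    have hkey : -(-ε) * aY + (Real.exp (-ε) - 1) * pY
        = pY * ((ε + 1) * Real.exp (-ε) - 1) - L := by
      rw [haYdef, ← hεM]; ring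
    rw [← hpYdef, hkey]
    have hh1 : pY * ((ε + 1) * Real.exp (-ε) - 1) ≤ 0 :=
      mul_nonpos_of_nonneg_of_nonpos hpY0 (by linarith)
    linarith
  -- subset
  have hEE : Real.exp (ε₁ + ε₀) = eε * eε * e1 := by
    rw [heεdef, he1def, ← Real.exp_add, ← Real.exp_add]
    congr 1; rw [hεdef]; ring
  have hsub : {ω | Real.exp (ε₁ + ε₀) * Y ω + (C / ε₀) * L ≤ X ω}
      ⊆ {ω | aX ≤ (∑ i ∈ s₁, Z i) ω} ∪ {ω | (∑ i ∈ s₂, Z i) ω ≤ aY} := by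
    intro ω hω
    simp only [Set.mem_setOf_eq] at hω
    by_contra hc
    simp only [Set.mem_union, Set.mem_setOf_eq, not_or, not_le] at hc
    obtain ⟨hc1, hc2⟩ := hc
    rw [hX' ω] at hc1
    rw [hY' ω] at hc2
    -- from hc2 : Y ω < aY is false... hc2 : aY < (∑...) ω = Y ω
    have hEY : pY < eε * (Y ω + M) := by
      have h1 : Real.exp (-ε) * pY < Y ω + M := by rw [haYdef] at hc2; linarith
      have h2 := mul_lt_mul_of_pos_left h1 heε0
      rw [Real.exp_neg, ← heεdef, ← mul_assoc, mul_inv_cancel₀ heε0.ne', one_mul] at h2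
      exact h2
    have h3 : eε * pX ≤ eε * (e1 * pY) := mul_le_mul_of_nonneg_left hEXY' heε0.le
    have h4 : eε * (e1 * pY) < eε * (e1 * (eε * (Y ω + M))) := by
      have := mul_lt_mul_of_pos_left hEY he10
      exact mul_lt_mul_of_pos_left this heε0
    have hCL : (C / ε₀) * L = (eε * eε * e1) * M + eε * M + M := by
      rw [hC, show ε₀ + ε₁ = ε₁ + ε₀ from add_comm _ _, hEE, ← hεM, hεdef]
      field_simp
      ring
    rw [hEE, hCL] at hω
    rw [haXdef] at hc1
    have hexp : eε * (e1 * (eε * (Y ω + M)))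
        = eε * eε * e1 * Y ω + eε * eε * e1 * M := by ring
    rw [hexp] at h4
    linarith
  -- union bound
  calc (μ {ω | Real.exp (ε₁ + ε₀) * Y ω + (C / ε₀) * L ≤ X ω}).toReal
      ≤ (μ ({ω | aX ≤ (∑ i ∈ s₁, Z i) ω} ∪ {ω | (∑ i ∈ s₂, Z i) ω ≤ aY})).toReal := by
        apply ENNReal.toReal_mono (measure_ne_top μ _) (measure_mono hsub)
    _ ≤ ((μ {ω | aX ≤ (∑ i ∈ s₁, Z i) ω}) + μ {ω | (∑ i ∈ s₂, Z i) ω ≤ aY}).toReal := by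
        apply ENNReal.toReal_mono (by finiteness) (measure_union_le _ _)
    _ = (μ {ω | aX ≤ (∑ i ∈ s₁, Z i) ω}).toReal + (μ {ω | (∑ i ∈ s₂, Z i) ω ≤ aY}).toReal :=
        ENNReal.toReal_add (measure_ne_top μ _) (measure_ne_top μ _)
    _ ≤ δ₀ / 2 + δ₀ / 2 := add_le_add hA hB
    _ = δ₀ := by ring
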